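/- arXiv:2102.10176 — 2 statements merged into one kernel-verified Lean document; each statement's English description precedes it below -/
import Mathlib

section
/- Let P_1, ..., P_M be probability densities and let P̃ = (1/M) ∑_{i=1}^M P_i be their centroid. Then at the optimal discriminator D*, the objective satisfies J(D*) = M log M − ∑_{i=1}^M KL(P_i ‖ P̃), where KL denotes the Kullback–Leibler divergence. -/
open MeasureTheory Real

/-- At the optimal discriminator `D_i*(z) = P_i(z)/∑ j, P_j(z)`, the
objective `J(D*) = -∑ i, E_{z∼P_i}[log D_i*(z)]` equals
`M log M - ∑ i, KL(P_i ‖ P̃)`, where `P̃ = (1/M) ∑ i, P_i` is the centroid and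
`KL(p ‖ q) = ∫ p log (p/q)`. -/
theorem can_main_theorem
    {Z : Type*} [MeasurableSpace Z] (μ : Measure Z) (M : ℕ) (hM : 0 < M)
    (P : Fin M → Z → ℝ)
    (hPmeas : ∀ i, Measurable (P i))
    (hPpos : ∀ i z, 0 < P i z)
    (hPprob : ∀ i, ∫ z, P i z ∂μ = 1)
    (hPint : ∀ i, Integrable (P i) μ)
    (hKLint : ∀ i,
      Integrable (fun z => P i z * Real.log (P i z / ((∑ j, P j z) / M))) μ) :
    (-∑ i, ∫ z, P i z * Real.log (P i z / ∑ j, P j z) ∂μ)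
      = M * Real.log M
        - ∑ i, ∫ z, P i z * Real.log (P i z / ((∑ j, P j z) / M)) ∂μ := by
  haveI : Nonempty (Fin M) := ⟨⟨0, hM⟩⟩
  have hMpos : (0:ℝ) < M := Nat.cast_pos.mpr hM
  have hS : ∀ z, 0 < ∑ j, P j z := fun z =>
    Finset.sum_pos (fun j _ => hPpos j z) Finset.univ_nonempty
  have hpt : ∀ i z, P i z * Real.log (P i z / ((∑ j, P j z) / M))
      = P i z * Real.log (P i z / ∑ j, P j z) + P i z * Real.log M := by
    intro i z
    have h1 : P i z / ((∑ j, P j z) / M) = (P i z / ∑ j, P j z) * M := by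
      field_simp
    rw [h1, Real.log_mul (ne_of_gt (div_pos (hPpos i z) (hS z))) (ne_of_gt hMpos), mul_add]
  have hint1 : ∀ i, Integrable (fun z => P i z * Real.log (P i z / ∑ j, P j z)) μ := by
    intro i
    have := (hKLint i).sub ((hPint i).mul_const (Real.log M))
    refine this.congr (Filter.Eventually.of_forall fun z => ?_)
    simp [hpt i z]
  have hKL : ∀ i, ∫ z, P i z * Real.log (P i z / ((∑ j, P j z) / M)) ∂μ
      = (∫ z, P i z * Real.log (P i z / ∑ j, P j z) ∂μ) + Real.log M := by
    intro i
    calc ∫ z, P i z * Real.log (P i z / ((∑ j, P j z) / M)) ∂μ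
        = ∫ z, (P i z * Real.log (P i z / ∑ j, P j z) + P i z * Real.log M) ∂μ := by
          simp_rw [hpt i]
      _ = (∫ z, P i z * Real.log (P i z / ∑ j, P j z) ∂μ)
            + ∫ z, P i z * Real.log M ∂μ :=
          integral_add (hint1 i) ((hPint i).mul_const _)
      _ = (∫ z, P i z * Real.log (P i z / ∑ j, P j z) ∂μ) + Real.log M := by
          rw [integral_mul_const, hPprob i, one_mul]
  simp only [hKL]
  rw [Finset.sum_add_distrib]
  simp [Finset.card_univ]
end

section
/- Suppose in an M-domain adversarial game the discriminator is held at its optimum D*(·) as a function of the current densities. Then minimizing −J(D*) over (P_1,...,P_M), i.e., minimizing ∑_{i=1}^M KL(P_i ‖ P̃), is achieved exactly when all P_i are equal, and in that case the feature extractor's adversarial objective value is M log M. -/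
open MeasureTheory Real

lemma can_key {a b : ℝ} (ha : 0 < a) (hb : 0 < b) :
    a - b ≤ a * Real.log (a / b) ∧ (a * Real.log (a / b) = a - b → a = b) := by
  have hba : 0 < b / a := div_pos hb ha
  have hlog : Real.log (a / b) = -Real.log (b / a) := by
    rw [Real.log_div ha.ne' hb.ne', Real.log_div hb.ne' ha.ne']; ring
  have hcancel : a * (b / a) = b := mul_div_cancel₀ b ha.ne'
  constructor
  · have h := Real.log_le_sub_one_of_pos hba
    nlinarith [mul_le_mul_of_nonneg_left h ha.le]
  · intro heq
    by_contra hne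
    have hba1 : b / a ≠ 1 := by
      intro h1
      exact hne (by field_simp at h1; linarith)
    have h := Real.log_lt_sub_one_of_pos hba hba1
    nlinarith [mul_lt_mul_of_pos_left h ha]

/-- Equilibrium of the CAN mini-max game with the discriminator held at its
optimum `D*`: minimizing `∑ i, KL(P_i ‖ P̃)` over the densities is achieved exactly when
all `P_i` coincide (a.e.), and in that case the adversarial objective value
`J(D*) = -∑ i, ∫ P_i log (P_i / ∑ j, P_j)` equals `M log M`. -/
theorem can_equilibrium
    {Z : Type*} [MeasurableSpace Z] (μ : Measure Z) (M : ℕ) (hM : 0 < M)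
    (P : Fin M → Z → ℝ)
    (hPmeas : ∀ i, Measurable (P i))
    (hPpos : ∀ i z, 0 < P i z)
    (hPprob : ∀ i, ∫ z, P i z ∂μ = 1)
    (hKLint : ∀ i,
      Integrable (fun z => P i z * Real.log (P i z / ((∑ j, P j z) / M))) μ) :
    (0 ≤ ∑ i, ∫ z, P i z * Real.log (P i z / ((∑ j, P j z) / M)) ∂μ) ∧
    ((∑ i, ∫ z, P i z * Real.log (P i z / ((∑ j, P j z) / M)) ∂μ) = 0 ↔
      ∀ i j, P i =ᵐ[μ] P j) ∧
    ((∀ i j, P i =ᵐ[μ] P j) →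
      (-∑ i, ∫ z, P i z * Real.log (P i z / ∑ j, P j z) ∂μ) = M * Real.log M) := by
  have hMR : (0:ℝ) < M := Nat.cast_pos.mpr hM
  set Q : Z → ℝ := fun z => (∑ j, P j z) / M with hQdef
  have hQpos : ∀ z, 0 < Q z := by
    intro z
    exact div_pos (Finset.sum_pos (fun j _ => hPpos j z) ⟨⟨0, hM⟩, Finset.mem_univ _⟩) hMR
  have hPint : ∀ i, Integrable (P i) μ := by
    intro i
    by_contra h
    have := hPprob i
    rw [integral_undef h] at this
    norm_num at this
  have hQint : Integrable Q μ := by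
    have : Integrable (fun z => ∑ j, P j z) μ := integrable_finset_sum _ (fun j _ => hPint j)
    exact this.div_const _
  have hQprob : ∫ z, Q z ∂μ = 1 := by
    rw [hQdef]
    simp only
    rw [integral_div, integral_finset_sum _ (fun j _ => hPint j)]
    simp [hPprob]
    simp [hM.ne']
  -- f i = integrand - (P i - Q), nonnegative
  have hfnn : ∀ i z, 0 ≤ P i z * Real.log (P i z / Q z) - (P i z - Q z) := by
    intro i z
    have := (can_key (hPpos i z) (hQpos z)).1
    linarith
  have hfint : ∀ i, Integrable (fun z => P i z * Real.log (P i z / Q z) - (P i z - Q z)) μ :=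
    fun i => (hKLint i).sub ((hPint i).sub hQint)
  have hKLeq : ∀ i, ∫ z, P i z * Real.log (P i z / Q z) ∂μ
      = ∫ z, (P i z * Real.log (P i z / Q z) - (P i z - Q z)) ∂μ := by
    intro i
    have h1 : Integrable (fun z => P i z * Real.log (P i z / Q z)) μ := hKLint i
    have h2 : Integrable (fun z => P i z - Q z) μ := (hPint i).sub hQint
    rw [integral_sub h1 h2, integral_sub (hPint i) hQint, hPprob i, hQprob]
    ring
  have hKLnn : ∀ i, 0 ≤ ∫ z, P i z * Real.log (P i z / Q z) ∂μ := by
    intro i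
    rw [hKLeq i]
    exact integral_nonneg (fun z => hfnn i z)
  refine ⟨Finset.sum_nonneg (fun i _ => hKLnn i), ⟨?_, ?_⟩, ?_⟩
  · -- sum = 0 → all P_i equal a.e.
    intro hsum
    have heach : ∀ i, ∫ z, P i z * Real.log (P i z / Q z) ∂μ = 0 := by
      intro i
      have := (Finset.sum_eq_zero_iff_of_nonneg (fun i _ => hKLnn i)).mp hsum i
        (Finset.mem_univ i)
      exact this
    have hPQ : ∀ i, P i =ᵐ[μ] Q := by
      intro i
      have h0 : ∫ z, (P i z * Real.log (P i z / Q z) - (P i z - Q z)) ∂μ = 0 := by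
        rw [← hKLeq i]; exact heach i
      have hae : (fun z => P i z * Real.log (P i z / Q z) - (P i z - Q z)) =ᵐ[μ] 0 :=
        (integral_eq_zero_iff_of_nonneg (fun z => hfnn i z) (hfint i)).mp h0
      filter_upwards [hae] with z hz
      have : P i z * Real.log (P i z / Q z) = P i z - Q z := by
        have := hz; simp only [Pi.zero_apply] at this; linarith
      exact (can_key (hPpos i z) (hQpos z)).2 this
    intro i j
    exact (hPQ i).trans (hPQ j).symm
  · -- all equal → sum = 0
    intro hall
    refine Finset.sum_eq_zero (fun i _ => ?_)
    have hae : ∀ᵐ z ∂μ, ∀ j, P j z = P i z := ae_all_iff.mpr (fun j => hall j i)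
    have : (fun z => P i z * Real.log (P i z / Q z)) =ᵐ[μ] (fun _ => (0:ℝ)) := by
      filter_upwards [hae] with z hz
      have hsum : (∑ j, P j z) = M * P i z := by
        rw [Finset.sum_congr rfl (fun j _ => hz j)]
        simp [mul_comm]
      have hQz : Q z = P i z := by
        rw [hQdef]; simp only; rw [hsum]; field_simp
      rw [hQz, div_self (hPpos i z).ne']
      simp
    rw [integral_congr_ae this]
    simp
  · -- value computation
    intro hall
    have hsum : ∀ i, (∫ z, P i z * Real.log (P i z / ∑ j, P j z) ∂μ) = -Real.log M := by
      intro i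
      have hae : ∀ᵐ z ∂μ, ∀ j, P j z = P i z := ae_all_iff.mpr (fun j => hall j i)
      have hcong : (fun z => P i z * Real.log (P i z / ∑ j, P j z)) =ᵐ[μ]
          (fun z => P i z * (-Real.log M)) := by
        filter_upwards [hae] with z hz
        have hsumz : (∑ j, P j z) = M * P i z := by
          rw [Finset.sum_congr rfl (fun j _ => hz j)]
          simp [mul_comm]
        rw [hsumz]
        have : P i z / (M * P i z) = (M:ℝ)⁻¹ := by
          rw [mul_comm]
          rw [div_mul_eq_div_div, div_self (hPpos i z).ne', one_div]
        rw [this, Real.log_inv]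
      rw [integral_congr_ae hcong, integral_mul_const, hPprob i, one_mul]
    rw [Finset.sum_congr rfl (fun i _ => hsum i)]
    simp
end
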